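/- Let s ≥ 2, r_s = 1, and write R_x(z) = R'_{x'}(z') − z_s P_{x''}(z') where x = (x', x'') and z = (z', z_s). Then (x', x'') ∈ 𝔼_E if and only if x' ∈ 𝔼_{E'} and sup_{z' ∈ 𝔻̄^{s−1}} |P_{x''}(z') / R'_{x'}(z')| < 1. -/

import Mathlib

open Set Finset

/-- The set `A(r₁,…,r_s)` of nonzero multi-indices `α` with `0 ≤ α_j ≤ r_j`. -/
def idxSet (s : ℕ) (r : Fin s → ℕ) : Finset (Fin s → ℕ) :=
  (Fintype.piFinset fun j => Finset.range (r j + 1)).erase 0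

/-- The polynomial `R_x(z) = 1 + Σ_{α ∈ A} (−1)^{|α|} x_α z^α`. -/
noncomputable def tetraR (s : ℕ) (r : Fin s → ℕ) (x : idxSet s r → ℂ) (z : Fin s → ℂ) : ℂ :=
  1 + ∑ α : idxSet s r, (-1 : ℂ) ^ (∑ j, (α : Fin s → ℕ) j) * x α *
    ∏ j, z j ^ (α : Fin s → ℕ) j

/-- The generalized tetrablock `𝔼_E = {x ∈ ℂ^N : R_x(z) ≠ 0 ∀ z ∈ 𝔻̄^s}`. -/
noncomputable def genTetrablock (s : ℕ) (r : Fin s → ℕ) : Set (idxSet s r → ℂ) :=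
  {x | ∀ z : Fin s → ℂ, (∀ j, ‖z j‖ ≤ 1) → tetraR s r x z ≠ 0}


/-- `ι : 𝔼_E → 𝔼_{E'}` forgetting the coefficients involving the last variable:
`x' α' = x (α',0)`. -/
noncomputable def tetraLower (s' : ℕ) (r : Fin (s' + 1) → ℕ)
    (x : idxSet (s' + 1) r → ℂ) : idxSet s' (fun j => r (Fin.castLE (Nat.le_succ s') j)) → ℂ :=
  fun α' => if h : (fun j : Fin (s' + 1) =>
        if hj : (j : ℕ) < s' then (α' : Fin s' → ℕ) ⟨j, hj⟩ else 0) ∈ idxSet (s' + 1) r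
    then x ⟨_, h⟩ else 0

/-- The polynomial `P_{x''}(z')` with `R_x(z', z_s) = R'_{x'}(z') − z_s P_{x''}(z')`. -/
noncomputable def tetraP (s' : ℕ) (r : Fin (s' + 1) → ℕ)
    (x : idxSet (s' + 1) r → ℂ) (z' : Fin s' → ℂ) : ℂ :=
  ∑ α : idxSet (s' + 1) r,
    if (α : Fin (s' + 1) → ℕ) (Fin.last s') = 1 then
      (-1 : ℂ) ^ (∑ j : Fin s', (α : Fin (s' + 1) → ℕ) (Fin.castLE (Nat.le_succ s') j)) *
        x α * ∏ j : Fin s', z' j ^ (α : Fin (s' + 1) → ℕ) (Fin.castLE (Nat.le_succ s') j)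
    else 0

lemma mem_idxSet_iff {s : ℕ} {r : Fin s → ℕ} {a : Fin s → ℕ} :
    a ∈ idxSet s r ↔ a ≠ 0 ∧ ∀ j, a j ≤ r j := by
  simp [idxSet, Fintype.mem_piFinset, Nat.lt_succ_iff]

section Ext
variable {s' : ℕ} (r : Fin (s' + 1) → ℕ)

/-- extension of a multi-index by 0 in the last coordinate -/
def extIdx (a' : Fin s' → ℕ) : Fin (s' + 1) → ℕ :=
  fun j : Fin (s' + 1) => if hj : (j : ℕ) < s' then a' ⟨j, hj⟩ else 0

lemma extIdx_castLE (a' : Fin s' → ℕ) (j : Fin s') :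
    extIdx a' (Fin.castLE (Nat.le_succ s') j) = a' j := by
  simp [extIdx, j.isLt, Fin.eta]

lemma extIdx_last (a' : Fin s' → ℕ) : extIdx a' (Fin.last s') = 0 := by
  simp [extIdx]

lemma extIdx_eq_zero_iff {a' : Fin s' → ℕ} : extIdx a' = 0 ↔ a' = 0 := by
  constructor
  · intro h
    funext j
    have := congrFun h (Fin.castLE (Nat.le_succ s') j)
    rwa [extIdx_castLE] at this
  · rintro rfl
    funext j
    simp [extIdx]

lemma extIdx_mem_iff {a' : Fin s' → ℕ} :
    extIdx a' ∈ idxSet (s' + 1) r ↔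
      a' ∈ idxSet s' (fun j => r (Fin.castLE (Nat.le_succ s') j)) := by
  rw [mem_idxSet_iff, mem_idxSet_iff]
  constructor
  · rintro ⟨h0, hb⟩
    refine ⟨fun h => h0 (by rw [h]; funext j; simp [extIdx]), fun j => ?_⟩
    have := hb (Fin.castLE (Nat.le_succ s') j)
    rwa [extIdx_castLE] at this
  · rintro ⟨h0, hb⟩
    refine ⟨fun h => h0 (extIdx_eq_zero_iff.mp h), fun j => ?_⟩
    by_cases hj : (j : ℕ) < s'
    · have : j = Fin.castLE (Nat.le_succ s') ⟨j, hj⟩ := by ext; rfl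
      rw [this, extIdx_castLE]
      exact hb _
    · have : j = Fin.last s' := Fin.ext (by simp only [Fin.val_last]; omega)
      rw [this, extIdx_last]
      exact Nat.zero_le _

lemma restrict_extIdx {a : Fin (s' + 1) → ℕ} (h : a (Fin.last s') = 0) :
    extIdx (fun j => a (Fin.castLE (Nat.le_succ s') j)) = a := by
  funext j
  by_cases hj : (j : ℕ) < s'
  · simp only [extIdx, dif_pos hj]
    rfl
  · have : j = Fin.last s' := Fin.ext (by simp only [Fin.val_last]; omega)
    rw [this, extIdx_last, h]

end Ext

section Decomp
variable {s' : ℕ} {r : Fin (s' + 1) → ℕ}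

/-- raw extension of `x` by zero -/
noncomputable def rawX (r : Fin (s' + 1) → ℕ) (x : idxSet (s' + 1) r → ℂ)
    (a : Fin (s' + 1) → ℕ) : ℂ :=
  if h : a ∈ idxSet (s' + 1) r then x ⟨a, h⟩ else 0

lemma rawX_coe (x : idxSet (s' + 1) r → ℂ) (α : idxSet (s' + 1) r) :
    rawX r x ↑α = x α := by
  simp [rawX]

lemma tetraLower_eq (x : idxSet (s' + 1) r → ℂ)
    (α' : idxSet s' (fun j => r (Fin.castLE (Nat.le_succ s') j))) :
    tetraLower s' r x α' = rawX r x (extIdx ↑α') := rfl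

lemma hcastLE (j : Fin s') : Fin.castLE (Nat.le_succ s') j = Fin.castSucc j := rfl

lemma tetraR_decomp (hlast : r (Fin.last s') = 1) (x : idxSet (s' + 1) r → ℂ)
    (z : Fin (s' + 1) → ℂ) :
    tetraR (s' + 1) r x z =
      tetraR s' (fun j => r (Fin.castLE (Nat.le_succ s') j)) (tetraLower s' r x)
        (fun j => z (Fin.castLE (Nat.le_succ s') j))
      - z (Fin.last s') * tetraP s' r x (fun j => z (Fin.castLE (Nat.le_succ s') j)) := by
  classical
  set X := rawX r x with hX
  set z' : Fin s' → ℂ := fun j => z (Fin.castLE (Nat.le_succ s') j) with hz'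
  have key : (∑ a ∈ idxSet (s' + 1) r, (-1 : ℂ) ^ (∑ j, a j) * X a * ∏ j, z j ^ a j)
      = (∑ a' ∈ idxSet s' (fun j => r (Fin.castLE (Nat.le_succ s') j)),
          (-1 : ℂ) ^ (∑ j, a' j) * X (extIdx a') * ∏ j, z' j ^ a' j)
        - z (Fin.last s') * ∑ a ∈ idxSet (s' + 1) r, (if a (Fin.last s') = 1 then
            (-1 : ℂ) ^ (∑ j : Fin s', a (Fin.castLE (Nat.le_succ s') j)) * X a *
              ∏ j : Fin s', z' j ^ a (Fin.castLE (Nat.le_succ s') j) else 0) := by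
    rw [← Finset.sum_filter_add_sum_filter_not (idxSet (s' + 1) r)
      (fun a => a (Fin.last s') = 0)]
    have h1 : ∑ a ∈ (idxSet (s' + 1) r).filter (fun a => a (Fin.last s') = 0),
        (-1 : ℂ) ^ (∑ j, a j) * X a * ∏ j, z j ^ a j
        = ∑ a' ∈ idxSet s' (fun j => r (Fin.castLE (Nat.le_succ s') j)),
            (-1 : ℂ) ^ (∑ j, a' j) * X (extIdx a') * ∏ j, z' j ^ a' j := by
      refine Finset.sum_nbij' (fun a => fun j : Fin s' => a (Fin.castLE (Nat.le_succ s') j))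
        (fun a' => extIdx a') ?_ ?_ ?_ ?_ ?_
      · intro a ha
        rw [Finset.mem_filter] at ha
        rw [← extIdx_mem_iff r, restrict_extIdx ha.2]
        exact ha.1
      · intro a' ha'
        rw [Finset.mem_filter]
        exact ⟨(extIdx_mem_iff r).mpr ha', extIdx_last a'⟩
      · intro a ha
        rw [Finset.mem_filter] at ha
        exact restrict_extIdx ha.2
      · intro a' _
        funext j
        exact extIdx_castLE a' j
      · intro a ha
        rw [Finset.mem_filter] at ha
        rw [restrict_extIdx ha.2]
        have hsgn : (∑ j, a j) = ∑ j : Fin s', (fun j => a (Fin.castLE (Nat.le_succ s') j)) j := by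
          rw [Fin.sum_univ_castSucc (f := fun j => a j), ha.2, add_zero]; rfl
        have hprod : (∏ j, z j ^ a j)
            = ∏ j : Fin s', z' j ^ (fun j => a (Fin.castLE (Nat.le_succ s') j)) j := by
          rw [Fin.prod_univ_castSucc (f := fun j => z j ^ a j), ha.2, pow_zero, mul_one]; rfl
        rw [hsgn, hprod]
    have h2 : ∑ a ∈ (idxSet (s' + 1) r).filter (fun a => ¬ a (Fin.last s') = 0),
        (-1 : ℂ) ^ (∑ j, a j) * X a * ∏ j, z j ^ a j
        = - z (Fin.last s') * ∑ a ∈ idxSet (s' + 1) r, (if a (Fin.last s') = 1 then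
            (-1 : ℂ) ^ (∑ j : Fin s', a (Fin.castLE (Nat.le_succ s') j)) * X a *
              ∏ j : Fin s', z' j ^ a (Fin.castLE (Nat.le_succ s') j) else 0) := by
      rw [← Finset.sum_filter]
      have hfil : (idxSet (s' + 1) r).filter (fun a => ¬ a (Fin.last s') = 0)
          = (idxSet (s' + 1) r).filter (fun a => a (Fin.last s') = 1) := by
        apply Finset.filter_congr
        intro a ha
        have hle : a (Fin.last s') ≤ 1 := by
          rw [← hlast]
          exact (mem_idxSet_iff.mp ha).2 _
        constructor
        · intro h; omega
        · intro h; omega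
      rw [hfil, Finset.mul_sum]
      apply Finset.sum_congr rfl
      intro a ha
      rw [Finset.mem_filter] at ha
      have hsgn : (∑ j, a j) = (∑ j : Fin s', a (Fin.castLE (Nat.le_succ s') j)) + 1 := by
        rw [Fin.sum_univ_castSucc (f := fun j => a j), ha.2]; rfl
      have hprod : (∏ j, z j ^ a j)
          = (∏ j : Fin s', z' j ^ a (Fin.castLE (Nat.le_succ s') j)) * z (Fin.last s') := by
        rw [Fin.prod_univ_castSucc (f := fun j => z j ^ a j), ha.2, pow_one]; rfl
      rw [hsgn, hprod, pow_succ]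
      ring
    rw [h1, h2]
    ring
  simp only [tetraR, tetraP]
  have e1 : (∑ α : idxSet (s' + 1) r, (-1 : ℂ) ^ (∑ j, (α : Fin (s' + 1) → ℕ) j) * x α *
      ∏ j, z j ^ (α : Fin (s' + 1) → ℕ) j)
      = ∑ a ∈ idxSet (s' + 1) r, (-1 : ℂ) ^ (∑ j, a j) * X a * ∏ j, z j ^ a j := by
    rw [← Finset.sum_attach (idxSet (s' + 1) r)
      (fun a => (-1 : ℂ) ^ (∑ j, a j) * X a * ∏ j, z j ^ a j)]
    exact Finset.sum_congr rfl fun α _ => by rw [hX, rawX_coe]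
  have e2 : (∑ α : idxSet s' (fun j => r (Fin.castLE (Nat.le_succ s') j)),
      (-1 : ℂ) ^ (∑ j, (α : Fin s' → ℕ) j) * tetraLower s' r x α *
        ∏ j, z' j ^ (α : Fin s' → ℕ) j)
      = ∑ a' ∈ idxSet s' (fun j => r (Fin.castLE (Nat.le_succ s') j)),
          (-1 : ℂ) ^ (∑ j, a' j) * X (extIdx a') * ∏ j, z' j ^ a' j := by
    rw [← Finset.sum_attach (idxSet s' (fun j => r (Fin.castLE (Nat.le_succ s') j)))
      (fun a' => (-1 : ℂ) ^ (∑ j, a' j) * X (extIdx a') * ∏ j, z' j ^ a' j)]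
    exact Finset.sum_congr rfl fun α _ => by rw [hX, ← tetraLower_eq]
  have e3 : (∑ α : idxSet (s' + 1) r, if (α : Fin (s' + 1) → ℕ) (Fin.last s') = 1 then
      (-1 : ℂ) ^ (∑ j : Fin s', (α : Fin (s' + 1) → ℕ) (Fin.castLE (Nat.le_succ s') j)) *
        x α * ∏ j : Fin s', z' j ^ (α : Fin (s' + 1) → ℕ) (Fin.castLE (Nat.le_succ s') j)
      else 0)
      = ∑ a ∈ idxSet (s' + 1) r, (if a (Fin.last s') = 1 then
          (-1 : ℂ) ^ (∑ j : Fin s', a (Fin.castLE (Nat.le_succ s') j)) * X a *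
            ∏ j : Fin s', z' j ^ a (Fin.castLE (Nat.le_succ s') j) else 0) := by
    rw [← Finset.sum_attach (idxSet (s' + 1) r) (fun a => if a (Fin.last s') = 1 then
      (-1 : ℂ) ^ (∑ j : Fin s', a (Fin.castLE (Nat.le_succ s') j)) * X a *
        ∏ j : Fin s', z' j ^ a (Fin.castLE (Nat.le_succ s') j) else 0)]
    exact Finset.sum_congr rfl fun α _ => by rw [hX, rawX_coe]
  rw [e1, e2, e3, key]
  ring
end Decomp

lemma continuous_tetraR (s : ℕ) (r : Fin s → ℕ) (x : idxSet s r → ℂ) :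
    Continuous (tetraR s r x) := by
  unfold tetraR
  refine continuous_const.add (continuous_finset_sum _ fun α _ => ?_)
  exact continuous_const.mul (continuous_finset_prod _ fun j _ => (continuous_apply j).pow _)

lemma continuous_tetraP (s' : ℕ) (r : Fin (s' + 1) → ℕ) (x : idxSet (s' + 1) r → ℂ) :
    Continuous (tetraP s' r x) := by
  unfold tetraP
  refine continuous_finset_sum _ fun α _ => ?_
  split_ifs
  · exact continuous_const.mul (continuous_finset_prod _ fun j _ => (continuous_apply j).pow _)
  · exact continuous_const

lemma isCompact_polydisc (s : ℕ) :
    IsCompact {z : Fin s → ℂ | ∀ j, ‖z j‖ ≤ 1} := by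
  have : {z : Fin s → ℂ | ∀ j, ‖z j‖ ≤ 1}
      = Set.pi Set.univ (fun _ : Fin s => Metric.closedBall (0 : ℂ) 1) := by
    ext z
    simp [Set.mem_pi, Metric.mem_closedBall, Complex.dist_eq]
  rw [this]
  exact isCompact_univ_pi fun _ => isCompact_closedBall 0 1

lemma zero_mem_polydisc (s : ℕ) : ∀ j : Fin s, ‖(0 : Fin s → ℂ) j‖ ≤ 1 := by
  intro j; simp

/-- existence of a maximizer for `|g / R|` on the polydisc, when `R` doesn't vanish there -/
lemma exists_max_ratio (s : ℕ) (r : Fin s → ℕ) (x' : idxSet s r → ℂ)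
    (hx' : ∀ z : Fin s → ℂ, (∀ j, ‖z j‖ ≤ 1) → tetraR s r x' z ≠ 0)
    (g : (Fin s → ℂ) → ℂ) (hg : Continuous g) :
    ∃ z₀ : Fin s → ℂ, (∀ j, ‖z₀ j‖ ≤ 1) ∧
      ∀ z : Fin s → ℂ, (∀ j, ‖z j‖ ≤ 1) →
        ‖g z / tetraR s r x' z‖ ≤ ‖g z₀ / tetraR s r x' z₀‖ := by
  have hf : ContinuousOn (fun z => ‖g z / tetraR s r x' z‖)
      {z : Fin s → ℂ | ∀ j, ‖z j‖ ≤ 1} := by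
    refine continuous_norm.comp_continuousOn ?_
    exact ContinuousOn.div hg.continuousOn (continuous_tetraR s r x').continuousOn
      (fun z hz => hx' z hz)
  obtain ⟨z₀, hz₀, hmax⟩ := (isCompact_polydisc s).exists_isMaxOn
    ⟨0, zero_mem_polydisc s⟩ hf
  exact ⟨z₀, hz₀, fun z hz => hmax hz⟩

/-- For `s ≥ 2` and `r_s = 1`: `x ∈ 𝔼_E` iff `x' ∈ 𝔼_{E'}` and
`sup_{z' ∈ 𝔻̄^{s−1}} |P_{x''}(z')/R'_{x'}(z')| < 1`. -/
theorem genTetrablock_mem_iff_sup_lt_one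
    (n s' : ℕ) (hn : 2 ≤ n) (hs : s' + 1 ≤ n) (hs' : 1 ≤ s')
    (r : Fin (s' + 1) → ℕ) (hr : ∀ j, 1 ≤ r j) (hsum : ∑ j, r j = n)
    (hlast : r (Fin.last s') = 1) (x : idxSet (s' + 1) r → ℂ) :
    x ∈ genTetrablock (s' + 1) r ↔
      (tetraLower s' r x ∈ genTetrablock s' (fun j => r (Fin.castLE (Nat.le_succ s') j)) ∧
        sSup {t : ℝ | ∃ z' : Fin s' → ℂ, (∀ j, ‖z' j‖ ≤ 1) ∧
          t = ‖tetraP s' r x z' /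
            tetraR s' (fun j => r (Fin.castLE (Nat.le_succ s') j)) (tetraLower s' r x) z'‖}
          < 1) := by
  classical
  constructor
  · intro hx
    have hR' : ∀ z' : Fin s' → ℂ, (∀ j, ‖z' j‖ ≤ 1) →
        tetraR s' (fun j => r (Fin.castLE (Nat.le_succ s') j)) (tetraLower s' r x) z' ≠ 0 := by
      intro z' hz'
      have hb : ∀ j, ‖(Fin.snoc z' (0 : ℂ) : Fin (s' + 1) → ℂ) j‖ ≤ 1 := by
        intro j
        refine Fin.lastCases ?_ ?_ j
        · rw [Fin.snoc_last]; simp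
        · intro i; rw [Fin.snoc_castSucc]; exact hz' i
      have h := hx (Fin.snoc z' (0 : ℂ)) hb
      rw [tetraR_decomp hlast] at h
      have hrestr : (fun j => (Fin.snoc z' (0 : ℂ) : Fin (s' + 1) → ℂ) (Fin.castLE (Nat.le_succ s') j)) = z' := by
        funext j
        rw [hcastLE, Fin.snoc_castSucc]
      rw [hrestr, Fin.snoc_last, zero_mul, sub_zero] at h
      exact h
    have hlt : ∀ z' : Fin s' → ℂ, (∀ j, ‖z' j‖ ≤ 1) →
        ‖tetraP s' r x z'‖ <
          ‖tetraR s' (fun j => r (Fin.castLE (Nat.le_succ s') j)) (tetraLower s' r x) z'‖ := by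
      intro z' hz'
      by_contra hcon
      push_neg at hcon
      have hPne : tetraP s' r x z' ≠ 0 := by
        intro h0
        rw [h0, norm_zero] at hcon
        exact hR' z' hz' (norm_eq_zero.mp (le_antisymm hcon (norm_nonneg _)))
      set c : ℂ := tetraR s' (fun j => r (Fin.castLE (Nat.le_succ s') j)) (tetraLower s' r x) z'
        / tetraP s' r x z' with hc
      have hcabs : ‖c‖ ≤ 1 := by
        rw [hc, norm_div]
        exact (div_le_one (norm_pos_iff.mpr hPne)).mpr hcon
      have hb : ∀ j, ‖(Fin.snoc z' c : Fin (s' + 1) → ℂ) j‖ ≤ 1 := by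
        intro j
        refine Fin.lastCases ?_ ?_ j
        · rw [Fin.snoc_last]; exact hcabs
        · intro i; rw [Fin.snoc_castSucc]; exact hz' i
      have h := hx (Fin.snoc z' c) hb
      rw [tetraR_decomp hlast] at h
      have hrestr : (fun j => (Fin.snoc z' c : Fin (s' + 1) → ℂ) (Fin.castLE (Nat.le_succ s') j)) = z' := by
        funext j
        rw [hcastLE, Fin.snoc_castSucc]
      rw [hrestr, Fin.snoc_last] at h
      apply h
      rw [hc, div_mul_cancel₀ _ hPne, sub_self]
    refine ⟨hR', ?_⟩
    obtain ⟨z₀, hz₀, hmax⟩ := exists_max_ratio s'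
      (fun j => r (Fin.castLE (Nat.le_succ s') j)) (tetraLower s' r x) hR'
      (tetraP s' r x) (continuous_tetraP s' r x)
    have hne : Set.Nonempty {t : ℝ | ∃ z' : Fin s' → ℂ, (∀ j, ‖z' j‖ ≤ 1) ∧
        t = ‖tetraP s' r x z' /
          tetraR s' (fun j => r (Fin.castLE (Nat.le_succ s') j)) (tetraLower s' r x) z'‖} :=
      ⟨_, ⟨0, zero_mem_polydisc s', rfl⟩⟩
    refine lt_of_le_of_lt (b := ‖tetraP s' r x z₀ /
      tetraR s' (fun j => r (Fin.castLE (Nat.le_succ s') j)) (tetraLower s' r x) z₀‖)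
      (csSup_le hne ?_) ?_
    · rintro t ⟨w, hw, rfl⟩
      exact hmax w hw
    · rw [norm_div]
      exact (div_lt_one (norm_pos_iff.mpr (hR' z₀ hz₀))).mpr (hlt z₀ hz₀)
  · rintro ⟨h1, h2⟩ z hz
    rw [tetraR_decomp hlast]
    have hz' : ∀ j : Fin s', ‖z (Fin.castLE (Nat.le_succ s') j)‖ ≤ 1 :=
      fun j => hz _
    have hRne := h1 (fun j => z (Fin.castLE (Nat.le_succ s') j)) hz'
    obtain ⟨z₀, hz₀, hmax⟩ := exists_max_ratio s'
      (fun j => r (Fin.castLE (Nat.le_succ s') j)) (tetraLower s' r x) h1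
      (tetraP s' r x) (continuous_tetraP s' r x)
    have hbdd : BddAbove {t : ℝ | ∃ z' : Fin s' → ℂ, (∀ j, ‖z' j‖ ≤ 1) ∧
        t = ‖tetraP s' r x z' /
          tetraR s' (fun j => r (Fin.castLE (Nat.le_succ s') j)) (tetraLower s' r x) z'‖} := by
      refine ⟨‖tetraP s' r x z₀ /
        tetraR s' (fun j => r (Fin.castLE (Nat.le_succ s') j)) (tetraLower s' r x) z₀‖, ?_⟩
      rintro t ⟨w, hw, rfl⟩
      exact hmax w hw
    have ht : ‖tetraP s' r x (fun j => z (Fin.castLE (Nat.le_succ s') j)) /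
        tetraR s' (fun j => r (Fin.castLE (Nat.le_succ s') j)) (tetraLower s' r x)
          (fun j => z (Fin.castLE (Nat.le_succ s') j))‖ <
        1 := lt_of_le_of_lt (le_csSup hbdd ⟨_, hz', rfl⟩) h2
    rw [norm_div] at ht
    have hPlt := (div_lt_one (norm_pos_iff.mpr hRne)).mp ht
    intro heq
    have hEq : tetraR s' (fun j => r (Fin.castLE (Nat.le_succ s') j)) (tetraLower s' r x)
        (fun j => z (Fin.castLE (Nat.le_succ s') j))
        = z (Fin.last s') * tetraP s' r x (fun j => z (Fin.castLE (Nat.le_succ s') j)) :=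
      sub_eq_zero.mp heq
    have habs : ‖tetraR s' (fun j => r (Fin.castLE (Nat.le_succ s') j))
        (tetraLower s' r x) (fun j => z (Fin.castLE (Nat.le_succ s') j))‖
        ≤ ‖tetraP s' r x (fun j => z (Fin.castLE (Nat.le_succ s') j))‖ := by
      rw [hEq, norm_mul]
      calc ‖z (Fin.last s')‖ * ‖tetraP s' r x
            (fun j => z (Fin.castLE (Nat.le_succ s') j))‖
          ≤ 1 * ‖tetraP s' r x (fun j => z (Fin.castLE (Nat.le_succ s') j))‖ :=
            mul_le_mul_of_nonneg_right (hz _) (norm_nonneg _)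
        _ = _ := one_mul _
    exact absurd hPlt (not_lt.mpr habs)
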